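/- Let n, k ≥ 1 and let q : U(1) × SU(n) → U(n) be the map q(z, A) = z·A. A k-tuple of elements of a topological group pairwise commutes in U(1) × SU(n) if and only if its image tuple under q pairwise commutes in U(n); the induced map C_k(U(1) × SU(n)) → C_k(U(n)), applying q in each coordinate, is a covering map, and each of its fibers has exactly nᵏ elements. -/

import Mathlib

/-- `commTuples G k` is the space `C_k(G) ≅ Hom(ℤᵏ, G)` of `k`-tuples of pairwise commuting
elements of `G`, topologized as a subspace of `Gᵏ`. -/
def commTuples (G : Type*) [Monoid G] [TopologicalSpace G] (k : ℕ) : Type _ :=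
  {f : Fin k → G // ∀ i j, Commute (f i) (f j)}

instance (G : Type*) [Monoid G] [TopologicalSpace G] (k : ℕ) :
    TopologicalSpace (commTuples G k) :=
  instTopologicalSpaceSubtype


open Topology
open scoped Classical

section Generic

variable {G H Y : Type*} [Group G] [TopologicalSpace G] [IsTopologicalGroup G]
  [Group H] [TopologicalSpace H] [TopologicalSpace Y]

/-- The standard trivialization of the pullback of a group hom with local sections. -/
noncomputable def pbTriv (q : G →* H) (φ : Y → H) (hφ : Continuous φ)
    (hsur : Function.Surjective q)
    (U : Set H) (s : H → G) (hUo : IsOpen U) (hsc : ContinuousOn s U)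
    (hqs : ∀ u ∈ U, q (s u) = u) :
    Bundle.Trivialization q.ker (fun p : {p : G × Y // q p.1 = φ p.2} => p.val.2) where
  baseSet := φ ⁻¹' U
  open_baseSet := hUo.preimage hφ
  toFun p := (p.val.2,
    if hc : (s (φ p.val.2))⁻¹ * p.val.1 ∈ q.ker then ⟨_, hc⟩ else 1)
  invFun uc := ⟨((if φ uc.1 ∈ U then s (φ uc.1) else Function.surjInv hsur (φ uc.1)) * uc.2.val,
      uc.1), by
    rw [map_mul]
    have hc : q uc.2.val = 1 := MonoidHom.mem_ker.mp uc.2.prop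
    rw [hc, mul_one]
    split_ifs with h
    · exact hqs _ h
    · exact Function.surjInv_eq hsur _⟩
  source := (fun p : {p : G × Y // q p.1 = φ p.2} => p.val.2) ⁻¹' (φ ⁻¹' U)
  target := (φ ⁻¹' U) ×ˢ Set.univ
  map_source' p hp := ⟨hp, trivial⟩
  map_target' uc huc := huc.1
  left_inv' := by
    rintro ⟨⟨x, y⟩, hxy⟩ hp
    have hUm : φ y ∈ U := hp
    have hker : (s (φ y))⁻¹ * x ∈ q.ker := by
      rw [MonoidHom.mem_ker, map_mul, map_inv, hqs _ hUm, hxy]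
      exact inv_mul_cancel _
    simp only [dif_pos hker]
    apply Subtype.ext
    simp only [if_pos hUm]
    exact Prod.ext (mul_inv_cancel_left _ _) rfl
  right_inv' := by
    rintro ⟨u, c⟩ huc
    have hUm : φ u ∈ U := huc.1
    simp only [if_pos hUm]
    have h2 : (s (φ u))⁻¹ * (s (φ u) * c.val) ∈ q.ker := by
      rw [inv_mul_cancel_left]; exact c.prop
    refine Prod.ext rfl ?_
    simp only [dif_pos h2]
    exact Subtype.ext (inv_mul_cancel_left _ _)
  open_source := ((hUo.preimage hφ).preimage (continuous_snd.comp continuous_subtype_val))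
  open_target := (hUo.preimage hφ).prod isOpen_univ
  continuousOn_toFun := by
    apply ContinuousOn.prodMk
    · exact (continuous_snd.comp continuous_subtype_val).continuousOn
    · rw [IsInducing.subtypeVal.continuousOn_iff]
      have key : ContinuousOn
          (fun p : {p : G × Y // q p.1 = φ p.2} => (s (φ p.val.2))⁻¹ * p.val.1)
          ((fun p : {p : G × Y // q p.1 = φ p.2} => p.val.2) ⁻¹' (φ ⁻¹' U)) := by
        refine ContinuousOn.mul ?_ (continuous_fst.comp continuous_subtype_val).continuousOn
        refine ContinuousOn.inv ?_
        exact hsc.comp ((hφ.comp (continuous_snd.comp continuous_subtype_val)).continuousOn)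
          (fun p hp => hp)
      refine key.congr ?_
      intro p hp
      have hker : (s (φ p.val.2))⁻¹ * p.val.1 ∈ q.ker := by
        rw [MonoidHom.mem_ker, map_mul, map_inv, hqs _ hp, p.prop]
        exact inv_mul_cancel _
      simp only [Function.comp_apply, dif_pos hker]
  continuousOn_invFun := by
    rw [(⟨rfl⟩ : IsInducing (Subtype.val : {p : G × Y // q p.1 = φ p.2} → G × Y)).continuousOn_iff]
    have key : ContinuousOn (fun uc : Y × q.ker => (s (φ uc.1) * uc.2.val, uc.1))
        ((φ ⁻¹' U) ×ˢ (Set.univ : Set q.ker)) := by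
      refine ContinuousOn.prodMk (ContinuousOn.mul ?_
        (continuous_subtype_val.comp continuous_snd).continuousOn)
        continuous_fst.continuousOn
      exact hsc.comp (hφ.comp continuous_fst).continuousOn (fun uc huc => huc.1)
    refine key.congr ?_
    intro uc huc
    show ((if φ uc.1 ∈ U then s (φ uc.1) else Function.surjInv hsur (φ uc.1)) * uc.2.val,
      uc.1) = _
    rw [if_pos (show φ uc.1 ∈ U from huc.1)]
  source_eq := rfl
  target_eq := rfl
  proj_toFun p hp := rfl

theorem pullback_isCoveringMap (q : G →* H) (φ : Y → H) (hφ : Continuous φ)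
    [DiscreteTopology q.ker]
    (hsec : ∀ h : H, ∃ (U : Set H) (s : H → G), IsOpen U ∧ h ∈ U ∧ ContinuousOn s U ∧
      ∀ u ∈ U, q (s u) = u) :
    IsCoveringMap (fun p : {p : G × Y // q p.1 = φ p.2} => p.val.2) := by
  have hsur : Function.Surjective q := fun h => by
    obtain ⟨U, s, _, hU, _, hqs⟩ := hsec h
    exact ⟨s h, hqs h hU⟩
  intro y
  obtain ⟨U, s, hUo, hyU, hsc, hqs⟩ := hsec (φ y)
  exact (IsEvenlyCovered.of_trivialization
    (t := pbTriv q φ hφ hsur U s hUo hsc hqs) hyU).to_isEvenlyCovered_preimage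

theorem pullback_fiber_card (q : G →* H) (φ : Y → H) (hsur : Function.Surjective q) (y : Y) :
    Nat.card ((fun p : {p : G × Y // q p.1 = φ p.2} => p.val.2) ⁻¹' {y}) = Nat.card q.ker := by
  apply Nat.card_congr
  refine ⟨fun p => ⟨(Function.surjInv hsur (φ y))⁻¹ * p.val.val.1, ?_⟩,
    fun c => ⟨⟨(Function.surjInv hsur (φ y) * c.val, y), ?_⟩, rfl⟩, ?_, ?_⟩
  · have hy : p.val.val.2 = y := p.prop
    rw [MonoidHom.mem_ker, map_mul, map_inv, Function.surjInv_eq hsur, p.val.prop, hy]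
    exact inv_mul_cancel _
  · rw [map_mul, Function.surjInv_eq hsur, c.prop.out, mul_one]
  · intro p
    apply Subtype.ext
    apply Subtype.ext
    exact Prod.ext (mul_inv_cancel_left _ _) p.prop.symm
  · intro c
    exact Subtype.ext (inv_mul_cancel_left _ _)

end Generic

section CircleLemmas

@[simp, norm_cast] theorem circle_coe_pow (z : Circle) (m : ℕ) :
    ((z ^ m : Circle) : ℂ) = (z : ℂ) ^ m := by
  induction m with
  | zero => simp
  | succ m ih => rw [pow_succ, pow_succ, Circle.coe_mul, ih]

theorem circle_pow_section (n : ℕ) (hn : 1 ≤ n) (w : Circle) :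
    ∃ (U : Set Circle) (s : Circle → Circle), IsOpen U ∧ w ∈ U ∧ ContinuousOn s U ∧
      ∀ z ∈ U, (s z) ^ n = z := by
  have hn0 : (n : ℝ) ≠ 0 := Nat.cast_ne_zero.mpr (by omega)
  have hw0 : (w : ℂ) ≠ 0 := w.coe_ne_zero
  refine ⟨{z : Circle | (z : ℂ) ≠ -(w : ℂ)},
    fun z => Circle.exp (Complex.arg (w : ℂ) / n) *
      Circle.exp (Complex.arg ((z : ℂ) / (w : ℂ)) / n), ?_, ?_, ?_, ?_⟩
  · exact isOpen_ne.preimage continuous_subtype_val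
  · intro h
    exact hw0 (by linear_combination (h : (w : ℂ) = -(w : ℂ)) / 2)
  · intro z hz
    apply ContinuousAt.continuousWithinAt
    have hslit : ((z : ℂ) / (w : ℂ)) ∈ Complex.slitPlane := by
      rw [Complex.mem_slitPlane_iff]
      by_contra h'
      push_neg at h'
      obtain ⟨hre, him⟩ := h'
      set u : ℂ := (z : ℂ) / (w : ℂ) with hu
      have habs : ‖u‖ = 1 := by
        rw [hu, norm_div, Circle.norm_coe, Circle.norm_coe, div_one]
      have hueq : u = (u.re : ℂ) := Complex.ext rfl (by simpa using him)
      have : |u.re| = 1 := by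
        rw [hueq] at habs; rwa [Complex.norm_real, Real.norm_eq_abs] at habs
      have hre1 : u.re = -1 := by
        rcases abs_eq (by norm_num : (0:ℝ) ≤ 1) |>.mp this with h | h
        · exfalso; rw [h] at hre; norm_num at hre
        · exact h
      have : u = -1 := by rw [hueq, hre1]; norm_num
      have : (z : ℂ) = -(w : ℂ) := by
        rw [hu, div_eq_iff hw0] at this
        simpa using this
      exact hz this
    have c1 : ContinuousAt (fun z : Circle => ((z : ℂ) / (w : ℂ))) z :=
      (continuous_subtype_val.div_const _).continuousAt
    have c2 : ContinuousAt Complex.arg ((z : ℂ) / (w : ℂ)) := Complex.continuousAt_arg hslit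
    have c3 : Continuous (fun t : ℝ => Circle.exp (t / n)) :=
      Circle.exp.continuous.comp (continuous_id.div_const _)
    have c4 := ContinuousAt.comp (x := z) (c3.continuousAt.comp c2) c1
    exact continuousAt_const.mul c4
  · intro z hz
    have hn0' : (n : ℂ) ≠ 0 := Nat.cast_ne_zero.mpr (by omega)
    apply Subtype.ext
    push_cast [mul_pow]
    have hkey : ∀ u : ℂ, ‖u‖ = 1 →
        Complex.exp ((u.arg : ℂ) / n * Complex.I) ^ n = u := by
      intro u hu
      rw [← Complex.exp_nat_mul]
      have harg : (n : ℂ) * ((u.arg : ℂ) / n * Complex.I) = (u.arg : ℂ) * Complex.I := by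
        field_simp
      rw [harg]
      have := Complex.norm_mul_exp_arg_mul_I u
      rwa [hu, Complex.ofReal_one, one_mul] at this
    rw [hkey _ (Circle.norm_coe w),
      hkey _ (by rw [norm_div, Circle.norm_coe, Circle.norm_coe, div_one]),
      mul_comm, div_mul_cancel₀ _ hw0]

noncomputable def circleRootsEquiv (n : ℕ) (hn : 0 < n) :
    {z : Circle // z ^ n = 1} ≃ (Polynomial.nthRootsFinset n (1 : ℂ)) where
  toFun z := ⟨(z.val : ℂ), (Polynomial.mem_nthRootsFinset hn 1).mpr (by
    have := congrArg (Subtype.val) z.prop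
    push_cast at this
    exact_mod_cast this)⟩
  invFun ζ := ⟨⟨ζ.val, by
    have hζ : (ζ.val : ℂ) ^ n = 1 := (Polynomial.mem_nthRootsFinset hn 1).mp ζ.prop
    have hnorm : ‖(ζ.val : ℂ)‖ ^ n = 1 := by rw [← norm_pow, hζ, norm_one]
    have : ‖(ζ.val : ℂ)‖ = 1 := by
      rcases (pow_eq_one_iff_cases.mp hnorm) with h | h | h
      · omega
      · exact h
      · exfalso
        have := norm_nonneg (ζ.val : ℂ)
        rw [h.1] at this; norm_num at this
    simp [Submonoid.unitSphere, this]⟩, by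
    apply Subtype.ext
    push_cast
    exact (Polynomial.mem_nthRootsFinset hn 1).mp ζ.prop⟩
  left_inv z := by apply Subtype.ext; apply Subtype.ext; rfl
  right_inv ζ := by apply Subtype.ext; rfl

theorem card_circle_roots (n : ℕ) (hn : 1 ≤ n) :
    Nat.card {z : Circle // z ^ n = 1} = n := by
  rw [Nat.card_congr (circleRootsEquiv n hn), Nat.card_eq_finsetCard,
    (Complex.isPrimitiveRoot_exp n (by omega)).card_nthRootsFinset]

instance circle_roots_finite (n : ℕ) [NeZero n] : Finite {z : Circle // z ^ n = 1} :=
  Finite.of_equiv _ (circleRootsEquiv n (Nat.pos_of_ne_zero (NeZero.ne n))).symm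

end CircleLemmas

section PiLemmas

theorem pi_pow_section (n k : ℕ) (hn : 1 ≤ n) (w : Fin k → Circle) :
    ∃ (U : Set (Fin k → Circle)) (s : (Fin k → Circle) → (Fin k → Circle)), IsOpen U ∧ w ∈ U ∧
      ContinuousOn s U ∧ ∀ z ∈ U, (powMonoidHom n : (Fin k → Circle) →* _) (s z) = z := by
  choose U s hUo hmem hcont hpow using fun i => circle_pow_section n hn (w i)
  refine ⟨Set.univ.pi U, fun z i => s i (z i), isOpen_set_pi Set.finite_univ (fun i _ => hUo i),
    fun i _ => hmem i, ?_, ?_⟩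
  · rw [continuousOn_pi]
    intro i
    exact (hcont i).comp (continuous_apply i).continuousOn (fun z hz => hz i trivial)
  · intro z hz
    funext i
    simp only [powMonoidHom_apply, Pi.pow_apply]
    exact hpow i (z i) (hz i trivial)

def kerPowEquiv (n k : ℕ) :
    ((powMonoidHom n : (Fin k → Circle) →* (Fin k → Circle)).ker) ≃
      (Fin k → {z : Circle // z ^ n = 1}) where
  toFun x i := ⟨x.val i, congrFun (MonoidHom.mem_ker.mp x.prop) i⟩
  invFun f := ⟨fun i => (f i).val, MonoidHom.mem_ker.mpr (funext fun i => (f i).prop)⟩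
  left_inv x := Subtype.ext rfl
  right_inv f := funext fun i => Subtype.ext rfl

theorem card_ker_pow (n k : ℕ) (hn : 1 ≤ n) :
    Nat.card ((powMonoidHom n : (Fin k → Circle) →* (Fin k → Circle)).ker) = n ^ k := by
  rw [Nat.card_congr (kerPowEquiv n k), Nat.card_pi]
  simp [card_circle_roots n hn]

end PiLemmas

set_option maxHeartbeats 1000000

/-- Let `q : U(1) × SU(n) → U(n)` be the map `q(z, A) = z·A`.  A `k`-tuple pairwise commutes
in `U(1) × SU(n)` if and only if its image tuple under `q` pairwise commutes in `U(n)`; the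
induced map `C_k(U(1) × SU(n)) → C_k(U(n))`, applying `q` in each coordinate, is a covering
map, and each of its fibers has exactly `nᵏ` elements. -/
theorem commTuples_covering (n k : ℕ) (hn : 1 ≤ n) (hk : 1 ≤ k)
    (q : Circle × Matrix.specialUnitaryGroup (Fin n) ℂ → Matrix.unitaryGroup (Fin n) ℂ)
    (hq : ∀ (z : Circle) (A : Matrix.specialUnitaryGroup (Fin n) ℂ),
      ((q (z, A) : Matrix (Fin n) (Fin n) ℂ)) = (z : ℂ) • (A : Matrix (Fin n) (Fin n) ℂ))
    (Q : commTuples (Circle × Matrix.specialUnitaryGroup (Fin n) ℂ) k →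
      commTuples (Matrix.unitaryGroup (Fin n) ℂ) k)
    (hQ : ∀ f i, (Q f).1 i = q (f.1 i)) :
    (∀ f : Fin k → Circle × Matrix.specialUnitaryGroup (Fin n) ℂ,
      (∀ i j, Commute (f i) (f j)) ↔ (∀ i j, Commute (q (f i)) (q (f j)))) ∧
    IsCoveringMap Q ∧
    (∀ g : commTuples (Matrix.unitaryGroup (Fin n) ℂ) k,
      Nat.card (Q ⁻¹' {g}) = n ^ k) := by
  classical
  haveI : NeZero n := ⟨by omega⟩
  have hcoe : ∀ x : Circle × Matrix.specialUnitaryGroup (Fin n) ℂ,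
      ((q x : Matrix (Fin n) (Fin n) ℂ)) = (x.1 : ℂ) • (x.2 : Matrix (Fin n) (Fin n) ℂ) :=
    fun x => hq x.1 x.2
  -- commuting criterion
  have hcomm : ∀ x y : Circle × Matrix.specialUnitaryGroup (Fin n) ℂ,
      Commute x y ↔ Commute (q x) (q y) := by
    intro x y
    have h1 : Commute x y ↔ ((x.2 : Matrix (Fin n) (Fin n) ℂ) * (y.2 : Matrix (Fin n) (Fin n) ℂ)
        = (y.2 : Matrix (Fin n) (Fin n) ℂ) * (x.2 : Matrix (Fin n) (Fin n) ℂ)) := by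
      constructor
      · intro h
        have h2 := congrArg (fun p => ((p.2 : Matrix (Fin n) (Fin n) ℂ))) h
        simpa using h2
      · intro h
        have h2 : x.2 * y.2 = y.2 * x.2 := Subtype.ext (by simpa using h)
        show x * y = y * x
        exact Prod.ext (mul_comm _ _) h2
    have h2 : Commute (q x) (q y) ↔
        ((x.2 : Matrix (Fin n) (Fin n) ℂ) * (y.2 : Matrix (Fin n) (Fin n) ℂ)
        = (y.2 : Matrix (Fin n) (Fin n) ℂ) * (x.2 : Matrix (Fin n) (Fin n) ℂ)) := by
      rw [commute_iff_eq, Subtype.ext_iff]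
      have hmul : ∀ a b : Matrix.unitaryGroup (Fin n) ℂ,
          ((a * b : Matrix.unitaryGroup (Fin n) ℂ) : Matrix (Fin n) (Fin n) ℂ)
          = (a : Matrix (Fin n) (Fin n) ℂ) * (b : Matrix (Fin n) (Fin n) ℂ) := fun a b => rfl
      rw [hmul, hmul, hcoe x, hcoe y, Matrix.smul_mul, Matrix.smul_mul, Matrix.mul_smul,
        Matrix.mul_smul, smul_smul, smul_smul, mul_comm ((y.1 : ℂ)) ((x.1 : ℂ))]
      constructor
      · intro h
        have hc : ((x.1 : ℂ)) * ((y.1 : ℂ)) ≠ 0 :=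
          mul_ne_zero x.1.coe_ne_zero y.1.coe_ne_zero
        exact smul_right_injective (Matrix (Fin n) (Fin n) ℂ) hc h
      · intro h; rw [h]
    rw [h1, h2]
  -- continuity of q
  have hqc : Continuous q := by
    refine IsInducing.subtypeVal.continuous_iff.mpr ?_
    have h5 : Continuous (fun x : Circle × Matrix.specialUnitaryGroup (Fin n) ℂ =>
        (x.1 : ℂ) • (x.2 : Matrix (Fin n) (Fin n) ℂ)) :=
      (continuous_fst.subtype_val).smul (continuous_snd.subtype_val)
    exact Continuous.congr h5 (fun x => (hcoe x).symm)
  -- determinant lands on the circle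
  have hdet : ∀ U : Matrix.unitaryGroup (Fin n) ℂ,
      ‖((U : Matrix (Fin n) (Fin n) ℂ).det)‖ = 1 := by
    intro U
    have h1 : (U : Matrix (Fin n) (Fin n) ℂ).det ∈ unitary ℂ :=
      Matrix.det_of_mem_unitary U.prop
    have h2 := (Unitary.mem_iff.mp h1).1
    have h3 : (Complex.normSq ((U : Matrix (Fin n) (Fin n) ℂ).det) : ℂ) = 1 := by
      rw [Complex.normSq_eq_conj_mul_self, ← Complex.star_def]
      exact h2
    have h4 : Complex.normSq ((U : Matrix (Fin n) (Fin n) ℂ).det) = 1 := by exact_mod_cast h3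
    rw [Complex.norm_def, h4, Real.sqrt_one]
  -- the determinant map to the torus
  let φ : commTuples (Matrix.unitaryGroup (Fin n) ℂ) k → (Fin k → Circle) :=
    fun g i => ⟨((g.val i : Matrix (Fin n) (Fin n) ℂ).det),
      mem_sphere_zero_iff_norm.mpr (hdet (g.val i))⟩
  have hφc : Continuous φ := by
    refine continuous_pi fun i => Continuous.subtype_mk ?_ _
    exact Continuous.matrix_det ((continuous_apply i).comp continuous_subtype_val).subtype_val
  haveI hkerfin : Finite ((powMonoidHom n : (Fin k → Circle) →* (Fin k → Circle)).ker) :=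
    Finite.of_equiv _ (kerPowEquiv n k).symm
  haveI : DiscreteTopology ((powMonoidHom n : (Fin k → Circle) →* (Fin k → Circle)).ker) := by
    infer_instance
  have hcov := pullback_isCoveringMap (powMonoidHom n) φ hφc (pi_pow_section n k hn)
  have hsur : Function.Surjective (powMonoidHom n : (Fin k → Circle) →* (Fin k → Circle)) := by
    intro w
    obtain ⟨U, s, _, hU, _, hqs⟩ := pi_pow_section n k hn w
    exact ⟨s w, hqs w hU⟩
  -- concrete form of Q
  let Q' : commTuples (Circle × Matrix.specialUnitaryGroup (Fin n) ℂ) k →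
      commTuples (Matrix.unitaryGroup (Fin n) ℂ) k :=
    fun f => ⟨fun i => q (f.val i), fun i j => (hcomm _ _).mp (f.prop i j)⟩
  have hQeq : Q = Q' := funext fun f => Subtype.ext (funext fun i => hQ f i)
  have hdet1 : ∀ A : Matrix.specialUnitaryGroup (Fin n) ℂ,
      (A : Matrix (Fin n) (Fin n) ℂ).det = 1 :=
    fun A => (Matrix.mem_specialUnitaryGroup_iff.mp A.prop).2
  have hdetq : ∀ x : Circle × Matrix.specialUnitaryGroup (Fin n) ℂ,
      ((q x : Matrix (Fin n) (Fin n) ℂ)).det = ((x.1 : ℂ)) ^ n := by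
    intro x
    rw [hcoe x, Matrix.det_smul, Fintype.card_fin, hdet1, mul_one]
  -- total space of the pullback
  let Z := {p : (Fin k → Circle) × commTuples (Matrix.unitaryGroup (Fin n) ℂ) k //
      (powMonoidHom n : (Fin k → Circle) →* (Fin k → Circle)) p.1 = φ p.2}
  let α : commTuples (Circle × Matrix.specialUnitaryGroup (Fin n) ℂ) k → Z :=
    fun f => ⟨((fun i => (f.val i).1), Q' f), by
      funext i
      apply Circle.ext
      show (((fun i => (f.val i).1) ^ n) i : ℂ) = ((Q' f).val i : Matrix (Fin n) (Fin n) ℂ).det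
      rw [Pi.pow_apply, circle_coe_pow]
      exact (hdetq (f.val i)).symm⟩
  have hzdet : ∀ (p : Z) (i : Fin k),
      ((p.val.1 i : ℂ)) ^ n = ((p.val.2.val i : Matrix (Fin n) (Fin n) ℂ)).det := by
    intro p i
    have h7 := congrArg (fun w : Fin k → Circle => ((w i : Circle) : ℂ)) p.prop
    simpa [powMonoidHom_apply, Pi.pow_apply, circle_coe_pow] using h7
  have hmemSU : ∀ (z : Circle) (U : Matrix.unitaryGroup (Fin n) ℂ),
      ((z : ℂ) ^ n = (U : Matrix (Fin n) (Fin n) ℂ).det) →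
      ((z : ℂ))⁻¹ • (U : Matrix (Fin n) (Fin n) ℂ) ∈ Matrix.specialUnitaryGroup (Fin n) ℂ := by
    intro z U hzU
    rw [Matrix.mem_specialUnitaryGroup_iff]
    constructor
    · rw [Matrix.mem_unitaryGroup_iff, star_smul, Matrix.smul_mul, Matrix.mul_smul, smul_smul]
      have h6 : ((z : ℂ))⁻¹ * star ((z : ℂ))⁻¹ = 1 := by
        rw [Complex.star_def, map_inv₀, ← mul_inv, Complex.mul_conj, Circle.normSq_coe]
        norm_num
      rw [h6, one_smul]
      exact Matrix.mem_unitaryGroup_iff.mp U.prop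
    · rw [Matrix.det_smul, Fintype.card_fin, ← hzU, inv_pow,
        inv_mul_cancel₀ (pow_ne_zero _ z.coe_ne_zero)]
  let βt : Z → (Fin k → Circle × Matrix.specialUnitaryGroup (Fin n) ℂ) := fun p i =>
    (p.val.1 i, ⟨(((p.val.1 i)⁻¹ : Circle) : ℂ) • (p.val.2.val i : Matrix (Fin n) (Fin n) ℂ),
      by rw [Circle.coe_inv]; exact hmemSU _ _ (hzdet p i)⟩)
  have hβq : ∀ (p : Z) (i : Fin k), q (βt p i) = p.val.2.val i := by
    intro p i
    apply Subtype.ext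
    show ((q (βt p i) : Matrix (Fin n) (Fin n) ℂ)) = _
    rw [hcoe (βt p i)]
    show (p.val.1 i : ℂ) • ((((p.val.1 i)⁻¹ : Circle) : ℂ) •
      (p.val.2.val i : Matrix (Fin n) (Fin n) ℂ)) = _
    rw [Circle.coe_inv, smul_smul, mul_inv_cancel₀ (p.val.1 i).coe_ne_zero, one_smul]
  let β : Z → commTuples (Circle × Matrix.specialUnitaryGroup (Fin n) ℂ) k := fun p =>
    ⟨βt p, fun i j => (hcomm _ _).mpr (by rw [hβq p i, hβq p j]; exact p.val.2.prop i j)⟩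
  have hβα : ∀ f, β (α f) = f := by
    intro f
    apply Subtype.ext; funext i
    refine Prod.ext rfl ?_
    apply Subtype.ext
    show ((((f.val i).1)⁻¹ : Circle) : ℂ) • ((Q' f).val i : Matrix (Fin n) (Fin n) ℂ)
      = ((f.val i).2 : Matrix (Fin n) (Fin n) ℂ)
    rw [show ((Q' f).val i : Matrix (Fin n) (Fin n) ℂ)
      = ((f.val i).1 : ℂ) • ((f.val i).2 : Matrix (Fin n) (Fin n) ℂ) from hcoe (f.val i)]
    rw [Circle.coe_inv, smul_smul, inv_mul_cancel₀ (f.val i).1.coe_ne_zero, one_smul]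
  have hαβ : ∀ p, α (β p) = p := by
    intro p
    apply Subtype.ext
    refine Prod.ext rfl ?_
    apply Subtype.ext; funext i
    exact hβq p i
  have hαc : Continuous α := by
    apply Continuous.subtype_mk
    refine Continuous.prodMk ?_ ?_
    · exact continuous_pi fun i => ((continuous_apply i).comp continuous_subtype_val).fst
    · exact Continuous.subtype_mk
        (continuous_pi fun i => hqc.comp ((continuous_apply i).comp continuous_subtype_val)) _
  have hβc : Continuous β := by
    apply Continuous.subtype_mk
    refine continuous_pi fun i => Continuous.prodMk ?_ ?_
    · exact (continuous_apply i).comp (continuous_fst.comp continuous_subtype_val)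
    · refine Continuous.subtype_mk (Continuous.smul (M := ℂ) (X := Matrix (Fin n) (Fin n) ℂ) ?_ ?_) _
      · have hz : Continuous fun p : Z => p.val.1 i :=
          (continuous_apply i).comp (continuous_fst.comp continuous_subtype_val)
        exact continuous_subtype_val.comp hz.inv
      · have hU : Continuous fun p : Z => ((p.val.2.val i : Matrix.unitaryGroup (Fin n) ℂ) :
            Matrix (Fin n) (Fin n) ℂ) := by
          have h1 : Continuous fun p : Z => p.val.2 := continuous_snd.comp continuous_subtype_val
          have h2 : Continuous fun p : Z => (p.val.2.val i : Matrix.unitaryGroup (Fin n) ℂ) :=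
            (continuous_apply i).comp (continuous_subtype_val.comp h1)
          exact h2.subtype_val
        exact hU
  let e : commTuples (Circle × Matrix.specialUnitaryGroup (Fin n) ℂ) k ≃ₜ Z :=
    { toFun := α, invFun := β, left_inv := hβα, right_inv := hαβ,
      continuous_toFun := hαc, continuous_invFun := hβc }
  have hQe : Q = (fun p : Z => p.val.2) ∘ e := by
    rw [hQeq]; rfl
  refine ⟨fun f => forall₂_congr (fun i j => hcomm _ _), ?_, ?_⟩
  · rw [hQe]
    intro y
    obtain ⟨hd, t, ht⟩ := hcov y
    exact ((hcov y).comp_homeomorph e).to_isEvenlyCovered_preimage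
  · intro g
    have hiff : ∀ f, f ∈ Q ⁻¹' {g} ↔ e f ∈ (fun p : Z => p.val.2) ⁻¹' {g} := by
      intro f
      rw [Set.mem_preimage, Set.mem_preimage, Set.mem_singleton_iff, Set.mem_singleton_iff, hQe]
      exact Iff.rfl
    calc Nat.card (Q ⁻¹' {g})
        = Nat.card ((fun p : Z => p.val.2) ⁻¹' {g}) :=
          Nat.card_congr (Equiv.subtypeEquiv e.toEquiv hiff)
      _ = Nat.card ((powMonoidHom n : (Fin k → Circle) →* (Fin k → Circle)).ker) :=
          pullback_fiber_card (powMonoidHom n) φ hsur g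
      _ = n ^ k := card_ker_pow n k hn
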